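/- Let X ∈ ℝ^{D×N} and Y ∈ ℝ^{D×N} with Σ_X = X Xᵀ and Σ_Y = Y Yᵀ invertible, let x_1 and y_1 denote the first columns of X and Y, let α ∈ ℝ, and let Ω ∈ ℝ^{D×D}. If Xᵀ Ω Y = α e_1 e_1ᵀ (where e_1 ∈ ℝ^N is the first standard basis vector), then Ω = α (Σ_X^{-1} x_1)(Σ_Y^{-1} y_1)ᵀ. -/

import Mathlib

open Matrix

/-- **The teacher constraint determines a rank-one head.**
If `Σ_X = X Xᵀ` and `Σ_Y = Y Yᵀ` are invertible and `Xᵀ Ω Y = α e₁ e₁ᵀ` (the head attends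
exactly to the feature pair `(x₁, y₁)`), then `Ω = α (Σ_X⁻¹ x₁)(Σ_Y⁻¹ y₁)ᵀ`. -/
theorem omega_eq_of_attends_first_pair {D N : ℕ} (hN : 1 ≤ N)
    (X Y : Matrix (Fin D) (Fin N) ℝ)
    (hX : IsUnit (X * Xᵀ).det) (hY : IsUnit (Y * Yᵀ).det)
    (x1 : Fin D → ℝ) (hx1 : x1 = fun k => X k ⟨0, by omega⟩)
    (y1 : Fin D → ℝ) (hy1 : y1 = fun k => Y k ⟨0, by omega⟩)
    (α : ℝ) (Om : Matrix (Fin D) (Fin D) ℝ)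
    (h : Xᵀ * Om * Y = Matrix.single (⟨0, by omega⟩ : Fin N) (⟨0, by omega⟩ : Fin N) α) :
    Om = α • Matrix.vecMulVec ((X * Xᵀ)⁻¹ *ᵥ x1) ((Y * Yᵀ)⁻¹ *ᵥ y1) := by
  have key : Om = (X * Xᵀ)⁻¹ * (X * (Xᵀ * Om * Y) * Yᵀ) * (Y * Yᵀ)⁻¹ := by
    have e : X * (Xᵀ * Om * Y) * Yᵀ = (X * Xᵀ) * Om * (Y * Yᵀ) := by
      simp only [Matrix.mul_assoc]
    rw [e, show (X * Xᵀ)⁻¹ * ((X * Xᵀ) * Om * (Y * Yᵀ)) * (Y * Yᵀ)⁻¹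
        = ((X * Xᵀ)⁻¹ * (X * Xᵀ)) * Om * ((Y * Yᵀ) * (Y * Yᵀ)⁻¹) by
      simp only [Matrix.mul_assoc],
      Matrix.nonsing_inv_mul _ hX, Matrix.mul_nonsing_inv _ hY,
      Matrix.one_mul, Matrix.mul_one]
  rw [h] at key
  have e2 : X * Matrix.single (⟨0, by omega⟩ : Fin N) (⟨0, by omega⟩ : Fin N) α * Yᵀ
      = α • Matrix.vecMulVec x1 y1 := by
    ext i j
    simp only [Matrix.mul_apply, Matrix.single, Matrix.of_apply, Matrix.smul_apply,
      Matrix.vecMulVec_apply, Matrix.transpose_apply, hx1, hy1, smul_eq_mul, ite_and,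
      Finset.mul_sum, Finset.sum_mul, mul_ite, mul_zero, ite_mul, zero_mul,
      Finset.sum_ite_eq, Finset.mem_univ, if_true]
    ring
  have hsymm : ((Y * Yᵀ)⁻¹)ᵀ = (Y * Yᵀ)⁻¹ := by
    rw [Matrix.transpose_nonsing_inv, Matrix.transpose_mul, Matrix.transpose_transpose]
  have hB : ∀ a b, (Y * Yᵀ)⁻¹ a b = (Y * Yᵀ)⁻¹ b a := fun a b =>
    (congrFun (congrFun hsymm a) b).symm
  rw [key, e2]
  ext i j
  simp only [Matrix.mul_apply, Matrix.smul_apply, Matrix.vecMulVec_apply, Matrix.mulVec,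
    dotProduct, smul_eq_mul, Finset.mul_sum, Finset.sum_mul]
  rw [Finset.sum_comm]
  conv_rhs => rw [Finset.sum_comm]
  refine Finset.sum_congr rfl fun l _ => ?_
  refine Finset.sum_congr rfl fun k _ => ?_
  rw [hB k j]
  ring
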